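/- Let C be a real symmetric positive semidefinite n×n matrix with trace(C) = n, let α ∈ (0,1), and let X be a real n×p matrix. Let Q be any real orthogonal n×n matrix and D any nonnegative diagonal matrix with C = QᵀDQ; write zᵢᵀ for the i-th row of Z = QX and Vᵢ = zᵢzᵢᵀ. Then Xᵀ (C + (α⁻¹ − 1)Iₙ)⁻¹ X − (α/n) · (Σᵢ Vᵢ^{1/2})² is positive semidefinite, where Vᵢ^{1/2} denotes the PSD square root of Vᵢ. -/

import Mathlib

open Matrix

/-- **Loewner-order lower bound `J(n) ⪰ α{(Σᵢ Vᵢ^{1/2})/√n}²` (proof of Remark S.3).**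
Let `C` be symmetric PSD with `trace C = n`, `α ∈ (0,1)`, `X` an `n × p` real matrix.
Let `Q` be any orthogonal matrix and `d` any nonnegative diagonal with `C = Qᵀ(diag d)Q`;
let `zᵢᵀ` be the `i`-th row of `Z = QX`, `Vᵢ = zᵢzᵢᵀ`, and `Wᵢ` the PSD square root of
`Vᵢ`. Then `Xᵀ(C + (α⁻¹ − 1)Iₙ)⁻¹X − (α/n)(Σᵢ Wᵢ)²` is positive semidefinite. -/
theorem stmt5 {n p : ℕ} (C : Matrix (Fin n) (Fin n) ℝ) (hC : C.PosSemidef)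
    (htr : C.trace = (n : ℝ)) (α : ℝ) (hα : α ∈ Set.Ioo (0 : ℝ) 1)
    (X : Matrix (Fin n) (Fin p) ℝ)
    (Q : Matrix (Fin n) (Fin n) ℝ) (hQ : Qᵀ * Q = 1)
    (d : Fin n → ℝ) (hd : ∀ i, 0 ≤ d i)
    (hCQ : C = Qᵀ * Matrix.diagonal d * Q)
    (W : Fin n → Matrix (Fin p) (Fin p) ℝ)
    (hW : ∀ i, (W i).PosSemidef)
    (hWsq : ∀ i, W i * W i = Matrix.vecMulVec ((Q * X) i) ((Q * X) i)) :
    (Xᵀ * (C + (α⁻¹ - 1) • (1 : Matrix (Fin n) (Fin n) ℝ))⁻¹ * X -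
      (α / n) • ((∑ i, W i) * (∑ i, W i))).PosSemidef := by
  obtain ⟨hα0, hα1⟩ := hα
  have hαinv : 1 < α⁻¹ := (one_lt_inv₀ hα0).mpr hα1
  set Z : Matrix (Fin n) (Fin p) ℝ := Q * X with hZ
  set c : Fin n → ℝ := fun i => d i + (α⁻¹ - 1) with hc
  have hcpos : ∀ i, 0 < c i := fun i => add_pos_of_nonneg_of_pos (hd i) (by linarith)
  have hQQ : Q * Qᵀ = 1 := mul_eq_one_comm.mp hQ
  -- the diagonalization
  have hM : C + (α⁻¹ - 1) • (1 : Matrix (Fin n) (Fin n) ℝ) = Qᵀ * Matrix.diagonal c * Q := by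
    have hdiag : Matrix.diagonal c
        = Matrix.diagonal d + (α⁻¹ - 1) • (1 : Matrix (Fin n) (Fin n) ℝ) := by
      ext i j
      by_cases h : i = j <;>
        simp [Matrix.diagonal_apply, Matrix.one_apply, h, hc]
    rw [hdiag, Matrix.mul_add, Matrix.add_mul, Matrix.mul_smul, Matrix.smul_mul,
      Matrix.mul_one, hQ, ← hCQ]
  have hMinv : (C + (α⁻¹ - 1) • (1 : Matrix (Fin n) (Fin n) ℝ))⁻¹
      = Qᵀ * Matrix.diagonal (fun i => (c i)⁻¹) * Q := by
    apply Matrix.inv_eq_right_inv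
    rw [hM]
    have hfun : (fun i => c i * (c i)⁻¹) = fun _ : Fin n => (1 : ℝ) :=
      funext fun i => mul_inv_cancel₀ (hcpos i).ne'
    have hdd : Matrix.diagonal c * Matrix.diagonal (fun i => (c i)⁻¹) = 1 := by
      rw [Matrix.diagonal_mul_diagonal, hfun, Matrix.diagonal_one]
    calc Qᵀ * Matrix.diagonal c * Q * (Qᵀ * Matrix.diagonal (fun i => (c i)⁻¹) * Q)
        = Qᵀ * Matrix.diagonal c * (Q * Qᵀ) * Matrix.diagonal (fun i => (c i)⁻¹) * Q := by
          simp only [Matrix.mul_assoc]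
      _ = Qᵀ * (Matrix.diagonal c * Matrix.diagonal (fun i => (c i)⁻¹)) * Q := by
          rw [hQQ, Matrix.mul_one]; simp only [Matrix.mul_assoc]
      _ = 1 := by rw [hdd, Matrix.mul_one, hQ]
  have hXMX : Xᵀ * (C + (α⁻¹ - 1) • (1 : Matrix (Fin n) (Fin n) ℝ))⁻¹ * X
      = Zᵀ * Matrix.diagonal (fun i => (c i)⁻¹) * Z := by
    rw [hMinv, hZ, Matrix.transpose_mul]
    simp only [Matrix.mul_assoc]
  -- PSD of the first term
  have hdiagPSD : (Matrix.diagonal (fun i => (c i)⁻¹)).PosSemidef :=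
    Matrix.PosSemidef.diagonal (fun i => inv_nonneg.mpr (hcpos i).le)
  have hterm1 : (Zᵀ * Matrix.diagonal (fun i => (c i)⁻¹) * Z).PosSemidef := by
    have := hdiagPSD.conjTranspose_mul_mul_same Z
    rwa [Matrix.conjTranspose_eq_transpose_of_trivial] at this
  -- symmetry facts
  have hWT : ∀ i, (W i)ᵀ = W i := fun i =>
    (Matrix.conjTranspose_eq_transpose_of_trivial (W i)).symm.trans (hW i).1
  have hSsym : (∑ i, W i)ᵀ = ∑ i, W i := by
    rw [Matrix.transpose_sum]
    exact Finset.sum_congr rfl fun i _ => hWT i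
  have hherm2 : ((α / (n : ℝ)) • ((∑ i, W i) * (∑ i, W i))).IsHermitian := by
    show _ᴴ = _
    rw [Matrix.conjTranspose_smul, Matrix.conjTranspose_mul,
      Matrix.conjTranspose_eq_transpose_of_trivial, hSsym, star_trivial]
  rw [hXMX]
  refine Matrix.posSemidef_iff_dotProduct_mulVec.mpr ⟨hterm1.1.sub hherm2, fun x => ?_⟩
  simp only [star_trivial, Matrix.sub_mulVec, dotProduct_sub, sub_nonneg]
  -- notation
  set s : Fin n → (Fin p → ℝ) := fun i => W i *ᵥ x with hs
  set w : Fin n → ℝ := Z *ᵥ x with hw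
  -- quadratic form of the first term
  have hqf1 : x ⬝ᵥ (Zᵀ * Matrix.diagonal (fun i => (c i)⁻¹) * Z) *ᵥ x
      = ∑ i, (c i)⁻¹ * w i ^ 2 := by
    rw [← Matrix.mulVec_mulVec, ← Matrix.mulVec_mulVec, Matrix.dotProduct_mulVec,
      Matrix.vecMul_transpose, ← hw]
    simp only [dotProduct, Matrix.mulVec_diagonal]
    exact Finset.sum_congr rfl fun i _ => by ring
  -- s i ⬝ᵥ s i = w i ^ 2
  have hsq : ∀ i, s i ⬝ᵥ s i = w i ^ 2 := by
    intro i
    have h1 : s i ⬝ᵥ s i = x ⬝ᵥ (W i * W i) *ᵥ x := by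
      rw [← Matrix.mulVec_mulVec, Matrix.dotProduct_mulVec x]
      congr 1
      show W i *ᵥ x = x ᵥ* W i
      rw [← Matrix.vecMul_transpose, hWT i]
    have hwz : w i = Z i ⬝ᵥ x := rfl
    have h2 : Matrix.vecMulVec (Z i) (Z i) *ᵥ x = (Z i ⬝ᵥ x) • Z i := by
      ext j
      simp only [Matrix.mulVec, dotProduct, Matrix.vecMulVec_apply, Pi.smul_apply,
        smul_eq_mul, Finset.sum_mul]
      exact Finset.sum_congr rfl fun k _ => by ring
    rw [h1, hWsq i, hwz, h2, dotProduct_smul, smul_eq_mul, dotProduct_comm, sq]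
  have hsnn : ∀ i, 0 ≤ s i ⬝ᵥ s i := fun i => by rw [hsq i]; positivity
  -- sum of mulVec
  have hSmv : (∑ i, W i) *ᵥ x = ∑ i, s i := by
    ext j
    simp only [Matrix.mulVec, dotProduct, Finset.sum_apply, Matrix.sum_apply,
      Finset.sum_mul, hs]
    exact Finset.sum_comm
  have hvm : x ᵥ* (∑ i, W i) = ∑ i, s i := by
    have h := Matrix.vecMul_transpose (∑ i, W i) x
    rw [hSsym] at h
    rw [h, hSmv]
  -- quadratic form of the second term
  have hqf2 : x ⬝ᵥ ((α / (n : ℝ)) • ((∑ i, W i) * (∑ i, W i))) *ᵥ x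
      = (α / n) * ((∑ i, s i) ⬝ᵥ (∑ i, s i)) := by
    rw [Matrix.smul_mulVec, dotProduct_smul, smul_eq_mul]
    congr 1
    rw [← Matrix.mulVec_mulVec, Matrix.dotProduct_mulVec x, hvm, hSmv]
  rw [hqf1, hqf2]
  -- now pure scalar inequality
  set t : Fin n → ℝ := fun i => Real.sqrt (s i ⬝ᵥ s i) with ht
  have htnn : ∀ i, 0 ≤ t i := fun i => Real.sqrt_nonneg _
  have ht2 : ∀ i, t i ^ 2 = w i ^ 2 := fun i => by
    rw [ht]; rw [Real.sq_sqrt (hsnn i), hsq i]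
  -- step 1 : (Σ s) ⬝ (Σ s) ≤ (Σ t)^2
  have step1 : (∑ i, s i) ⬝ᵥ (∑ i, s i) ≤ (∑ i, t i) ^ 2 := by
    have hexp : (∑ i, s i) ⬝ᵥ (∑ i, s i) = ∑ i, ∑ j, s i ⬝ᵥ s j := by
      simp only [dotProduct, Finset.sum_apply, Finset.sum_mul, Finset.mul_sum]
      rw [Finset.sum_comm]
      refine Finset.sum_congr rfl fun i _ => ?_
      rw [Finset.sum_comm]
      exact Finset.sum_congr rfl fun j _ => Finset.sum_congr rfl fun k _ => mul_comm _ _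
    have hCS : ∀ i j, s i ⬝ᵥ s j ≤ t i * t j := by
      intro i j
      have h := Finset.sum_mul_sq_le_sq_mul_sq Finset.univ (s i) (s j)
      have h2 : (s i ⬝ᵥ s j) ^ 2 ≤ (s i ⬝ᵥ s i) * (s j ⬝ᵥ s j) := by
        simpa [dotProduct, sq] using h
      calc s i ⬝ᵥ s j ≤ |s i ⬝ᵥ s j| := le_abs_self _
        _ = Real.sqrt ((s i ⬝ᵥ s j) ^ 2) := (Real.sqrt_sq_eq_abs _).symm
        _ ≤ Real.sqrt ((s i ⬝ᵥ s i) * (s j ⬝ᵥ s j)) := Real.sqrt_le_sqrt h2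
        _ = t i * t j := Real.sqrt_mul (hsnn i) _
    rw [hexp, sq, Finset.sum_mul]
    refine Finset.sum_le_sum fun i _ => ?_
    rw [Finset.mul_sum]
    exact Finset.sum_le_sum fun j _ => hCS i j
  -- step 2 : (Σ t)^2 ≤ (Σ c) * (Σ c⁻¹ t²)
  have step2 : (∑ i, t i) ^ 2 ≤ (∑ i, c i) * ∑ i, (c i)⁻¹ * w i ^ 2 := by
    have h := Finset.sum_mul_sq_le_sq_mul_sq Finset.univ
      (fun i => Real.sqrt (c i)) (fun i => Real.sqrt ((c i)⁻¹) * t i)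
    have e1 : ∀ i, Real.sqrt (c i) * (Real.sqrt ((c i)⁻¹) * t i) = t i := by
      intro i
      rw [← mul_assoc, ← Real.sqrt_mul (hcpos i).le, mul_inv_cancel₀ (hcpos i).ne',
        Real.sqrt_one, one_mul]
    have e2 : ∀ i, Real.sqrt (c i) ^ 2 = c i := fun i => Real.sq_sqrt (hcpos i).le
    have e3 : ∀ i, (Real.sqrt ((c i)⁻¹) * t i) ^ 2 = (c i)⁻¹ * w i ^ 2 := by
      intro i
      rw [mul_pow, Real.sq_sqrt (inv_nonneg.mpr (hcpos i).le), ht2 i]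
    calc (∑ i, t i) ^ 2
        = (∑ i, Real.sqrt (c i) * (Real.sqrt ((c i)⁻¹) * t i)) ^ 2 := by
          congr 1; exact (Finset.sum_congr rfl fun i _ => (e1 i).symm)
      _ ≤ (∑ i, Real.sqrt (c i) ^ 2) * ∑ i, (Real.sqrt ((c i)⁻¹) * t i) ^ 2 := h
      _ = (∑ i, c i) * ∑ i, (c i)⁻¹ * w i ^ 2 := by
          congr 1
          · exact Finset.sum_congr rfl fun i _ => e2 i
          · exact Finset.sum_congr rfl fun i _ => e3 i
  -- trace computation : Σ c = n * α⁻¹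
  have hsumd : ∑ i, d i = (n : ℝ) := by
    have h1 : (Qᵀ * Matrix.diagonal d * Q).trace = (Matrix.diagonal d).trace := by
      rw [Matrix.trace_mul_cycle, hQQ, Matrix.one_mul]
    rw [← Matrix.trace_diagonal, ← h1, ← hCQ, htr]
  have hsumc : ∑ i, c i = (n : ℝ) * α⁻¹ := by
    simp only [hc, Finset.sum_add_distrib, hsumd, Finset.sum_const, Finset.card_univ,
      Fintype.card_fin, nsmul_eq_mul]
    ring
  -- conclude
  have hrhsnn : 0 ≤ ∑ i, (c i)⁻¹ * w i ^ 2 :=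
    Finset.sum_nonneg fun i _ => mul_nonneg (inv_nonneg.mpr (hcpos i).le) (sq_nonneg _)
  have hkey : (α / n) * ((n : ℝ) * α⁻¹) ≤ 1 := by
    rcases Nat.eq_zero_or_pos n with hn | hn
    · simp [hn]
    · have hn' : (0 : ℝ) < n := Nat.cast_pos.mpr hn
      have : (α / (n : ℝ)) * ((n : ℝ) * α⁻¹) = 1 := by
        field_simp
      rw [this]
  calc (α / n) * ((∑ i, s i) ⬝ᵥ (∑ i, s i))
      ≤ (α / n) * ((∑ i, c i) * ∑ i, (c i)⁻¹ * w i ^ 2) := by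
        refine mul_le_mul_of_nonneg_left (step1.trans step2)
          (div_nonneg hα0.le (Nat.cast_nonneg n))
    _ = ((α / n) * ((n : ℝ) * α⁻¹)) * ∑ i, (c i)⁻¹ * w i ^ 2 := by rw [hsumc]; ring
    _ ≤ 1 * ∑ i, (c i)⁻¹ * w i ^ 2 := mul_le_mul_of_nonneg_right hkey hrhsnn
    _ = ∑ i, (c i)⁻¹ * w i ^ 2 := one_mul _
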